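/- Let Δ be a compact simplex in ℝⁿ and let (f_s)_{s ∈ (0,∞)} be a family of continuous real-valued functions on Δ such that for each x ∈ Δ, s ↦ f_s(x) is nondecreasing in s. Define f(x) := lim_{s↓0} f_s(x) = inf_{s>0} f_s(x), and assume the concave envelope env(f) is finite everywhere on Δ. Then for every x ∈ Δ, env(f)(x) = lim_{s↓0} env(f_s)(x), where env(g) denotes the pointwise smallest concave function dominating g on Δ. -/

import Mathlib

open Filter Set

namespace Stmt16Aux

variable {n k : ℕ}

/-- The linear parametrization of the simplex by the standard simplex. -/
noncomputable def sig (v : Fin (k + 1) → (Fin n → ℝ)) (w : Fin (k + 1) → ℝ) :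
    Fin n → ℝ := ∑ j, w j • v j

lemma sig_continuous (v : Fin (k + 1) → (Fin n → ℝ)) : Continuous (sig v) := by
  unfold sig
  exact continuous_finset_sum _ fun j _ => (continuous_apply j).smul continuous_const

lemma sig_mem (v : Fin (k + 1) → (Fin n → ℝ)) {w : Fin (k + 1) → ℝ}
    (hw : w ∈ stdSimplex ℝ (Fin (k + 1))) :
    sig v w ∈ convexHull ℝ (Set.range v) := by
  have h := Finset.centerMass_mem_convexHull (Finset.univ (α := Fin (k + 1)))
    (w := w) (fun i _ => hw.1 i) (by rw [hw.2]; norm_num)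
    (fun i _ => Set.mem_range_self (f := v) i)
  rwa [Finset.centerMass_eq_of_sum_1 _ _ hw.2] at h

lemma sig_surj (v : Fin (k + 1) → (Fin n → ℝ)) {z : Fin n → ℝ}
    (hz : z ∈ convexHull ℝ (Set.range v)) :
    ∃ w ∈ stdSimplex ℝ (Fin (k + 1)), sig v w = z := by
  have hlin : IsLinearMap ℝ (sig v) := by
    constructor
    · intro a b; unfold sig
      rw [← Finset.sum_add_distrib]
      exact Finset.sum_congr rfl fun j _ => by rw [Pi.add_apply, add_smul]
    · intro c a; unfold sig
      rw [Finset.smul_sum]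
      exact Finset.sum_congr rfl fun j _ => by rw [Pi.smul_apply, smul_smul, smul_eq_mul]
  have himg : convexHull ℝ (Set.range v) ⊆ sig v '' stdSimplex ℝ (Fin (k + 1)) := by
    apply convexHull_min
    · rintro _ ⟨i, rfl⟩
      refine ⟨fun j => if i = j then 1 else 0, ite_eq_mem_stdSimplex ℝ i, ?_⟩
      unfold sig
      simp
    · exact (convex_stdSimplex ℝ _).is_linear_image hlin
  obtain ⟨w, hw, hwz⟩ := himg hz
  exact ⟨w, hw, hwz⟩

/-- Jensen's inequality on the simplex. -/
lemma jensen (v : Fin (k + 1) → (Fin n → ℝ)) {Δ : Set (Fin n → ℝ)}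
    (hΔ : Δ = convexHull ℝ (Set.range v)) {φ : (Fin n → ℝ) → ℝ}
    (hφ : ConcaveOn ℝ Δ φ) {w : Fin (k + 1) → ℝ}
    (hw : w ∈ stdSimplex ℝ (Fin (k + 1))) :
    ∑ j, w j * φ (v j) ≤ φ (sig v w) := by
  have h := hφ.le_map_sum (t := Finset.univ) (w := w) (p := v)
    (fun i _ => hw.1 i) hw.2
    (fun i _ => by rw [hΔ]; exact subset_convexHull ℝ _ (Set.mem_range_self i))
  simpa [sig, smul_eq_mul] using h

/-- Lower bound for concave majorants of `g` on the simplex. -/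
lemma env_lb (v : Fin (k + 1) → (Fin n → ℝ)) {Δ : Set (Fin n → ℝ)}
    (hΔ : Δ = convexHull ℝ (Set.range v)) {g φ : (Fin n → ℝ) → ℝ}
    (hφ : ConcaveOn ℝ Δ φ) (hg : ∀ z ∈ Δ, g z ≤ φ z) {x : Fin n → ℝ} (hx : x ∈ Δ) :
    Finset.univ.inf' ⟨0, Finset.mem_univ 0⟩ (fun j => g (v j)) ≤ φ x := by
  set m := Finset.univ.inf' ⟨0, Finset.mem_univ 0⟩ (fun j => g (v j)) with hm
  obtain ⟨w, hw, rfl⟩ := sig_surj v (hΔ ▸ hx)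
  have h1 : m = ∑ j, w j * m := by rw [← Finset.sum_mul, hw.2, one_mul]
  have h2 : ∑ j, w j * m ≤ ∑ j, w j * φ (v j) := by
    refine Finset.sum_le_sum fun j _ => mul_le_mul_of_nonneg_left ?_ (hw.1 j)
    refine le_trans (Finset.inf'_le _ (Finset.mem_univ j)) ?_
    exact hg (v j) (by rw [hΔ]; exact subset_convexHull ℝ _ (Set.mem_range_self j))
  calc m = ∑ j, w j * m := h1
    _ ≤ ∑ j, w j * φ (v j) := h2
    _ ≤ φ (sig v w) := jensen v hΔ hφ hw

/-- Key concavity estimate: if `u ⪰ β • w` coordinatewise then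
`φ(σ u) ≥ β φ(σ w) + (1-β) m`. -/
lemma key (v : Fin (k + 1) → (Fin n → ℝ)) {Δ : Set (Fin n → ℝ)}
    (hΔ : Δ = convexHull ℝ (Set.range v)) {φ : (Fin n → ℝ) → ℝ}
    (hφ : ConcaveOn ℝ Δ φ) {m : ℝ} (hm : ∀ z ∈ Δ, m ≤ φ z)
    {w u : Fin (k + 1) → ℝ} (hw : w ∈ stdSimplex ℝ (Fin (k + 1)))
    (hu : u ∈ stdSimplex ℝ (Fin (k + 1)))
    {β : ℝ} (hβ0 : 0 ≤ β) (hβ1 : β < 1) (h : ∀ j, β * w j ≤ u j) :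
    β * φ (sig v w) + (1 - β) * m ≤ φ (sig v u) := by
  have h1β : (0 : ℝ) < 1 - β := by linarith
  set q : Fin (k + 1) → ℝ := fun j => (u j - β * w j) / (1 - β) with hq_def
  have hq : q ∈ stdSimplex ℝ (Fin (k + 1)) := by
    constructor
    · intro j
      exact div_nonneg (by linarith [h j]) h1β.le
    · rw [← Finset.sum_div]
      rw [Finset.sum_sub_distrib, ← Finset.mul_sum, hw.2, hu.2]
      field_simp
  have hdecomp : sig v u = β • sig v w + (1 - β) • sig v q := by
    unfold sig
    rw [Finset.smul_sum, Finset.smul_sum, ← Finset.sum_add_distrib]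
    refine Finset.sum_congr rfl fun j _ => ?_
    rw [smul_smul, smul_smul, ← add_smul]
    congr 1
    rw [hq_def]
    field_simp
    ring
  have hwΔ : sig v w ∈ Δ := hΔ ▸ sig_mem v hw
  have hqΔ : sig v q ∈ Δ := hΔ ▸ sig_mem v hq
  have hconc := hφ.2 hwΔ hqΔ hβ0 h1β.le (by ring)
  rw [← hdecomp] at hconc
  have : m ≤ φ (sig v q) := hm _ hqΔ
  calc β * φ (sig v w) + (1 - β) * m ≤ β * φ (sig v w) + (1 - β) * φ (sig v q) := by
        have := mul_le_mul_of_nonneg_left this h1β.le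
        linarith
    _ = β • φ (sig v w) + (1 - β) • φ (sig v q) := by simp [smul_eq_mul]
    _ ≤ φ (sig v u) := hconc

/-- Dini-type lemma: for every concave majorant `φ` of `f` and `ε > 0`,
some `F s` is below `φ + ε` uniformly on `Δ`. -/
lemma dini (v : Fin (k + 1) → (Fin n → ℝ)) {Δ : Set (Fin n → ℝ)}
    (hΔ : Δ = convexHull ℝ (Set.range v))
    {F : ℝ → (Fin n → ℝ) → ℝ}
    (hcont : ∀ s : ℝ, 0 < s → ContinuousOn (F s) Δ)
    (hmono : ∀ x ∈ Δ, ∀ s t : ℝ, 0 < s → s ≤ t → F s x ≤ F t x)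
    {f : (Fin n → ℝ) → ℝ}
    (hf : ∀ x ∈ Δ, Filter.Tendsto (fun s : ℝ => F s x)
      (nhdsWithin 0 (Set.Ioi 0)) (nhds (f x)))
    {φ : (Fin n → ℝ) → ℝ} (hφ : ConcaveOn ℝ Δ φ) (hφf : ∀ z ∈ Δ, f z ≤ φ z)
    {ε : ℝ} (hε : 0 < ε) :
    ∃ s : ℝ, 0 < s ∧ ∀ z ∈ Δ, F s z ≤ φ z + ε := by
  by_contra hcon
  push_neg at hcon
  -- extract a sequence of bad points
  have hbad : ∀ i : ℕ, ∃ w ∈ stdSimplex ℝ (Fin (k + 1)),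
      φ (sig v w) + ε < F (1 / (i + 1 : ℝ)) (sig v w) := by
    intro i
    have hipos : (0 : ℝ) < 1 / (i + 1 : ℝ) := by positivity
    obtain ⟨z, hzΔ, hzlt⟩ := hcon _ hipos
    obtain ⟨w, hw, rfl⟩ := sig_surj v (hΔ ▸ hzΔ)
    exact ⟨w, hw, hzlt⟩
  choose W hWmem hWlt using hbad
  -- extract a convergent subsequence
  obtain ⟨wl, hwl, g, hgmono, hgtend⟩ :=
    (isCompact_stdSimplex ℝ (Fin (k + 1))).tendsto_subseq hWmem
  set zl := sig v wl with hzl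
  have hzlΔ : zl ∈ Δ := hΔ ▸ sig_mem v hwl
  -- lower bound for φ on Δ
  obtain ⟨m, hm⟩ : ∃ m : ℝ, ∀ z ∈ Δ, m ≤ φ z :=
    ⟨_, fun z hz => env_lb v hΔ hφ (fun _ _ => le_refl _) hz⟩
  -- step 1: for each t > 0 and β ∈ [0,1), β φ(zl) + (1-β) m + ε ≤ F t zl
  have step1 : ∀ t : ℝ, 0 < t → ∀ β : ℝ, 0 ≤ β → β < 1 →
      β * φ zl + (1 - β) * m + ε ≤ F t zl := by
    intro t ht β hβ0 hβ1
    have htendΔ : Tendsto (fun i => sig v (W (g i))) atTop (nhdsWithin zl Δ) := by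
      apply tendsto_nhdsWithin_of_tendsto_nhds_of_eventually_within
      · exact ((sig_continuous v).tendsto wl).comp hgtend
      · exact Eventually.of_forall fun i => hΔ ▸ sig_mem v (hWmem (g i))
    have htendF : Tendsto (fun i => F t (sig v (W (g i)))) atTop (nhds (F t zl)) :=
      ((hcont t ht) zl hzlΔ).tendsto.comp htendΔ
    refine ge_of_tendsto htendF ?_
    -- eventually the bound holds
    have hev1 : ∀ᶠ i : ℕ in atTop, (1 : ℝ) / (g i + 1) ≤ t := by
      have : Tendsto (fun i : ℕ => (1 : ℝ) / (g i + 1)) atTop (nhds 0) := by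
        apply Tendsto.comp (g := fun i : ℕ => (1 : ℝ) / (i + 1))
        · exact tendsto_one_div_add_atTop_nhds_zero_nat
        · exact hgmono.tendsto_atTop
      exact (this.eventually_le_const ht).mono fun i hi => hi
    have hev2 : ∀ᶠ i : ℕ in atTop, ∀ j, β * wl j ≤ W (g i) j := by
      rw [eventually_all]
      intro j
      rcases eq_or_lt_of_le (hwl.1 j) with hzero | hpos
      · exact Eventually.of_forall fun i => by
          rw [← hzero, mul_zero]; exact (hWmem (g i)).1 j
      · have hlt : β * wl j < wl j := by nlinarith
        have htendj : Tendsto (fun i => W (g i) j) atTop (nhds (wl j)) :=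
          ((continuous_apply j).tendsto wl).comp hgtend
        exact htendj.eventually_const_le hlt
    filter_upwards [hev1, hev2] with i h1 h2
    have hk1 := key v hΔ hφ hm hwl (hWmem (g i)) hβ0 hβ1 h2
    have hk2 := hWlt (g i)
    have hk3 : F (1 / (g i + 1 : ℝ)) (sig v (W (g i))) ≤ F t (sig v (W (g i))) :=
      hmono _ (hΔ ▸ sig_mem v (hWmem (g i))) _ _ (by positivity) h1
    linarith
  -- step 2: let β → 1: φ(zl) + ε ≤ F t zl for all t > 0
  have step2 : ∀ t : ℝ, 0 < t → φ zl + ε ≤ F t zl := by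
    intro t ht
    have hten : Tendsto (fun β : ℝ => β * φ zl + (1 - β) * m + ε)
        (nhdsWithin 1 (Set.Iio 1)) (nhds (φ zl + ε)) := by
      have hc : Continuous (fun β : ℝ => β * φ zl + (1 - β) * m + ε) := by continuity
      have h := (hc.tendsto 1).mono_left (nhdsWithin_le_nhds (s := Set.Iio (1:ℝ)))
      simpa using h
    refine le_of_tendsto hten ?_
    have hmem1 : ∀ᶠ β : ℝ in nhdsWithin 1 (Set.Iio 1), β ∈ Set.Iio (1 : ℝ) :=
      eventually_mem_nhdsWithin
    have hmem0 : ∀ᶠ β : ℝ in nhdsWithin 1 (Set.Iio 1), (0 : ℝ) < β := by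
      apply eventually_nhdsWithin_of_eventually_nhds
      exact eventually_gt_nhds (by norm_num)
    filter_upwards [hmem1, hmem0] with β hβ1 hβ0
    exact step1 t ht β hβ0.le hβ1
  -- step 3: let t → 0: contradiction
  have step3 : φ zl + ε ≤ f zl := by
    refine ge_of_tendsto (hf zl hzlΔ) ?_
    filter_upwards [eventually_mem_nhdsWithin] with t ht
    exact step2 t ht
  have := hφf zl hzlΔ
  linarith

end Stmt16Aux

/-- The concave envelope of `g` relative to a set `Δ`: the pointwise infimum of
all concave functions on `Δ` dominating `g` on `Δ`. -/
noncomputable def concaveEnv {n : ℕ} (Δ : Set (Fin n → ℝ))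
    (g : (Fin n → ℝ) → ℝ) (x : Fin n → ℝ) : ℝ :=
  sInf {y : ℝ | ∃ φ : (Fin n → ℝ) → ℝ,
    ConcaveOn ℝ Δ φ ∧ (∀ z ∈ Δ, g z ≤ φ z) ∧ y = φ x}

/-- On a compact simplex `Δ`, if `(F s)_{s>0}` is a family of continuous
functions, nondecreasing in `s`, converging pointwise as `s ↓ 0` to `f`, and
the concave envelope of `f` is finite (i.e. `f` has a finite concave majorant),
then the concave envelope of `F s` converges pointwise on `Δ` to the concave
envelope of `f` as `s ↓ 0`. -/
theorem stmt_16 (n k : ℕ) (v : Fin (k + 1) → (Fin n → ℝ))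
    (hv : AffineIndependent ℝ v)
    (Δ : Set (Fin n → ℝ)) (hΔ : Δ = convexHull ℝ (Set.range v))
    (F : ℝ → (Fin n → ℝ) → ℝ)
    (hcont : ∀ s : ℝ, 0 < s → ContinuousOn (F s) Δ)
    (hmono : ∀ x ∈ Δ, ∀ s t : ℝ, 0 < s → s ≤ t → F s x ≤ F t x)
    (f : (Fin n → ℝ) → ℝ)
    (hf : ∀ x ∈ Δ, Filter.Tendsto (fun s : ℝ => F s x)
      (nhdsWithin 0 (Set.Ioi 0)) (nhds (f x)))
    (henv : ∃ φ : (Fin n → ℝ) → ℝ, ConcaveOn ℝ Δ φ ∧ ∀ z ∈ Δ, f z ≤ φ z) :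
    ∀ x ∈ Δ, Filter.Tendsto (fun s : ℝ => concaveEnv Δ (F s) x)
      (nhdsWithin 0 (Set.Ioi 0)) (nhds (concaveEnv Δ f x)) := by
  intro x hx
  classical
  set A : ((Fin n → ℝ) → ℝ) → Set ℝ := fun g =>
    {y : ℝ | ∃ φ : (Fin n → ℝ) → ℝ,
      ConcaveOn ℝ Δ φ ∧ (∀ z ∈ Δ, g z ≤ φ z) ∧ y = φ x} with hA
  have hAenv : ∀ g, concaveEnv Δ g x = sInf (A g) := fun g => rfl
  have hconvΔ : Convex ℝ Δ := hΔ ▸ convex_convexHull ℝ _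
  have hcompΔ : IsCompact Δ := hΔ ▸ (Set.finite_range v).isCompact_convexHull ℝ
  have hΔne : Δ.Nonempty := ⟨x, hx⟩
  -- lower boundedness of all A g
  have hbdd : ∀ g : (Fin n → ℝ) → ℝ, BddBelow (A g) := by
    intro g
    refine ⟨Finset.univ.inf' ⟨0, Finset.mem_univ 0⟩ (fun j => g (v j)), ?_⟩
    rintro y ⟨φ, hφ, hgφ, rfl⟩
    exact Stmt16Aux.env_lb v hΔ hφ hgφ hx
  -- f ≤ F s on Δ for s > 0
  have hfF : ∀ s : ℝ, 0 < s → ∀ z ∈ Δ, f z ≤ F s z := by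
    intro s hs z hz
    refine le_of_tendsto (hf z hz) ?_
    filter_upwards [Ioo_mem_nhdsGT_of_mem (Set.mem_Ico.2 ⟨le_refl 0, hs⟩)] with t ht
    exact hmono z hz t s ht.1 ht.2.le
  -- F s ≤ F t on Δ for 0 < s ≤ t
  -- A (F s) nonempty for s > 0
  have hAne : ∀ s : ℝ, 0 < s → (A (F s)).Nonempty := by
    intro s hs
    obtain ⟨z₀, _, hmax⟩ := hcompΔ.exists_isMaxOn hΔne (hcont s hs)
    refine ⟨F s z₀, fun _ => F s z₀, concaveOn_const _ hconvΔ, fun z hz => hmax hz, rfl⟩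
  have hAfne : (A f).Nonempty := by
    obtain ⟨φ, hφ, hφf⟩ := henv
    exact ⟨φ x, φ, hφ, hφf, rfl⟩
  -- monotonicity of the envelope
  have hmonoA : ∀ g₁ g₂ : (Fin n → ℝ) → ℝ, (∀ z ∈ Δ, g₁ z ≤ g₂ z) →
      (A g₂).Nonempty → sInf (A g₁) ≤ sInf (A g₂) := by
    intro g₁ g₂ h12 hne
    refine csInf_le_csInf (hbdd g₁) hne ?_
    rintro y ⟨φ, hφ, hgφ, rfl⟩
    exact ⟨φ, hφ, fun z hz => (h12 z hz).trans (hgφ z hz), rfl⟩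
  -- the limit statement
  rw [Metric.tendsto_nhdsWithin_nhds]
  intro ε hε
  -- choose a near-optimal concave majorant of f
  have hlt : sInf (A f) < sInf (A f) + ε / 2 := by linarith
  obtain ⟨y, hyA, hylt⟩ := exists_lt_of_csInf_lt hAfne hlt
  obtain ⟨φ, hφ, hφf, rfl⟩ := hyA
  -- Dini: find s₀ with F s₀ ≤ φ + ε/2 on Δ
  obtain ⟨s₀, hs₀, hFs₀⟩ := Stmt16Aux.dini v hΔ hcont hmono hf hφ hφf
    (show (0 : ℝ) < ε / 2 by linarith)
  refine ⟨s₀, hs₀, ?_⟩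
  intro s hs hdist
  have hs' : (0 : ℝ) < s := hs
  have hss₀ : s ≤ s₀ := by
    rw [Real.dist_eq, sub_zero, abs_of_pos hs'] at hdist
    exact hdist.le
  -- E x ≤ E_s x
  have h1 : sInf (A f) ≤ sInf (A (F s)) :=
    hmonoA f (F s) (hfF s hs') (hAne s hs')
  -- E_s x ≤ E_{s₀} x
  have h2 : sInf (A (F s)) ≤ sInf (A (F s₀)) :=
    hmonoA (F s) (F s₀) (fun z hz => hmono z hz s s₀ hs' hss₀) (hAne s₀ hs₀)
  -- E_{s₀} x ≤ φ x + ε/2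
  have h3 : sInf (A (F s₀)) ≤ φ x + ε / 2 := by
    refine csInf_le (hbdd (F s₀)) ?_
    refine ⟨φ + fun _ => ε / 2, hφ.add (concaveOn_const _ hconvΔ), ?_, rfl⟩
    intro z hz
    simpa using hFs₀ z hz
  have h4 : sInf (A (F s₀)) < sInf (A f) + ε := by
    have : φ x + ε / 2 < sInf (A f) + ε := by linarith
    linarith
  rw [hAenv, hAenv, Real.dist_eq, abs_lt]
  constructor <;> linarith
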